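/- arXiv:1306.4236 — 3 statements merged into one kernel-verified Lean document; each statement's English description precedes it below -/
import Mathlib

section
/- Let s > 625 and let F be a 3-uniform [0,s]-almost intersecting hypergraph such that for every edge e ∈ F and every two vertices x, y ∈ e, there is an edge of F disjoint from {x,y}. If F has exactly 6s+10 edges, then there exist disjoint finite sets A and B with |A| = 4 and |B| ≥ s+1, and a function f from the 2-element subsets of A to the (s+1)-element subsets of B satisfying f(S) = f(A \ S) for every 2-element subset S of A, such that F = { S ∪ {x} : S ⊆ A, |S| = 2, x ∈ f(S) } together with all four 3-element subsets of A. -/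
namespace Stmt17

open Finset

variable {α : Type*} [DecidableEq α]

def deg (F : Finset (Finset α)) (v : α) : ℕ := (F.filter (fun e => v ∈ e)).card
def cod (F : Finset (Finset α)) (x y : α) : ℕ := (F.filter (fun e => x ∈ e ∧ y ∈ e)).card
def mis (F : Finset (Finset α)) (x y : α) : ℕ := (F.filter (fun e => x ∉ e ∧ y ∉ e)).card

lemma card_filter_partition (s : Finset β) (p q : β → Prop) [DecidablePred p] [DecidablePred q] :
    (s.filter (fun b => p b ∧ q b)).card + (s.filter (fun b => p b ∧ ¬ q b)).card
      = (s.filter p).card := by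
  rw [← filter_filter, ← filter_filter]
  exact card_filter_add_card_filter_not _

/-- L3 : inclusion-exclusion identity. -/
lemma L3 (F : Finset (Finset α)) (x y : α) :
    F.card + cod F x y = deg F x + deg F y + mis F x y := by
  have h1 : (F.filter (fun e => x ∈ e)).card + (F.filter (fun e => ¬ x ∈ e)).card = F.card :=
    card_filter_add_card_filter_not _
  have h2 : (F.filter (fun e => x ∉ e ∧ y ∈ e)).card + (F.filter (fun e => x ∉ e ∧ ¬ y ∈ e)).card
      = (F.filter (fun e => x ∉ e)).card := card_filter_partition F _ _
  have h3 : (F.filter (fun e => y ∈ e ∧ x ∈ e)).card + (F.filter (fun e => y ∈ e ∧ ¬ x ∈ e)).card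
      = (F.filter (fun e => y ∈ e)).card := card_filter_partition F _ _
  have e1 : (F.filter (fun e => y ∈ e ∧ x ∈ e)) = (F.filter (fun e => x ∈ e ∧ y ∈ e)) := by
    apply filter_congr; intro e _; constructor <;> (intro h; exact ⟨h.2, h.1⟩)
  have e2 : (F.filter (fun e => y ∈ e ∧ ¬ x ∈ e)) = (F.filter (fun e => x ∉ e ∧ y ∈ e)) := by
    apply filter_congr; intro e _; constructor <;> (intro h; exact ⟨h.2, h.1⟩)
  rw [e1, e2] at h3
  unfold deg cod mis
  omega

/-- L5 : every edge meets all but at most `s` edges. -/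
lemma L5 {s : ℕ} {F : Finset (Finset α)}
    (hai : ∀ A ∈ F, (F.filter fun B => Disjoint A B).card ≤ s)
    {e : Finset α} (he : e ∈ F) :
    F.card ≤ s + ∑ v ∈ e, deg F v := by
  have h1 : (F.filter (fun h => Disjoint e h)).card + (F.filter (fun h => ¬ Disjoint e h)).card
      = F.card := card_filter_add_card_filter_not _
  have h2 : (F.filter (fun h => ¬ Disjoint e h)) ⊆ e.biUnion (fun v => F.filter (fun h => v ∈ h)) := by
    intro h hh
    simp only [mem_filter] at hh
    obtain ⟨v, hv, hvh⟩ := Finset.not_disjoint_iff.mp hh.2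
    exact mem_biUnion.mpr ⟨v, hv, mem_filter.mpr ⟨hh.1, hvh⟩⟩
  have h3 := (card_le_card h2).trans (card_biUnion_le)
  have h4 := hai e he
  unfold deg
  omega

/-- L6 : degree vs an avoiding edge. -/
lemma L6 {s : ℕ} {F : Finset (Finset α)}
    (hai : ∀ A ∈ F, (F.filter fun B => Disjoint A B).card ≤ s)
    {g : Finset α} (hg : g ∈ F) {v : α} (hv : v ∉ g) :
    deg F v ≤ s + ∑ w ∈ g, cod F v w := by
  have h1 : ((F.filter (fun e => v ∈ e)).filter (fun h => Disjoint g h)).card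
      + ((F.filter (fun e => v ∈ e)).filter (fun h => ¬ Disjoint g h)).card
      = deg F v := card_filter_add_card_filter_not _
  have h2 : ((F.filter (fun e => v ∈ e)).filter (fun h => Disjoint g h))
      ⊆ F.filter (fun B => Disjoint g B) := by
    intro h hh
    simp only [mem_filter] at hh ⊢
    exact ⟨hh.1.1, hh.2⟩
  have h3 : ((F.filter (fun e => v ∈ e)).filter (fun h => ¬ Disjoint g h))
      ⊆ g.biUnion (fun w => F.filter (fun e => v ∈ e ∧ w ∈ e)) := by
    intro h hh
    simp only [mem_filter] at hh
    obtain ⟨w, hw, hwh⟩ := Finset.not_disjoint_iff.mp hh.2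
    exact mem_biUnion.mpr ⟨w, hw, mem_filter.mpr ⟨hh.1.1, hh.1.2, hwh⟩⟩
  have h4 := (card_le_card h3).trans (card_biUnion_le)
  have h5 := (card_le_card h2).trans (hai g hg)
  unfold cod
  omega

/-- an edge containing three distinct vertices is exactly the triple -/
lemma triple_eq_ {F : Finset (Finset α)} (huniform : ∀ A ∈ F, A.card = 3)
    {e : Finset α} (he : e ∈ F) {x y z : α} (hx : x ∈ e) (hy : y ∈ e) (hz : z ∈ e)
    (hxy : x ≠ y) (hxz : x ≠ z) (hyz : y ≠ z) : e = {x, y, z} := by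
  have hsub : ({x, y, z} : Finset α) ⊆ e := by
    intro a ha
    simp only [mem_insert, mem_singleton] at ha
    rcases ha with rfl | rfl | rfl <;> assumption
  have hcard : ({x, y, z} : Finset α).card = 3 := by
    rw [card_insert_of_notMem (by simp [hxy, hxz]), card_insert_of_notMem (by simp [hyz]),
      card_singleton]
  exact (Finset.eq_of_subset_of_card_le hsub (by rw [hcard, huniform e he])).symm

/-- at most one edge contains three given distinct vertices -/
lemma card_triple_le_one_ {F : Finset (Finset α)} (huniform : ∀ A ∈ F, A.card = 3)
    {x y z : α} (hxy : x ≠ y) (hxz : x ≠ z) (hyz : y ≠ z) :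
    (F.filter (fun e => x ∈ e ∧ y ∈ e ∧ z ∈ e)).card ≤ 1 := by
  apply Finset.card_le_one.mpr
  intro a ha b hb
  simp only [mem_filter] at ha hb
  rw [triple_eq_ huniform ha.1 ha.2.1 ha.2.2.1 ha.2.2.2 hxy hxz hyz,
    triple_eq_ huniform hb.1 hb.2.1 hb.2.2.1 hb.2.2.2 hxy hxz hyz]

/-- L2 : codegree bound. -/
lemma L2 {s : ℕ} {F : Finset (Finset α)}
    (huniform : ∀ A ∈ F, A.card = 3)
    (hai : ∀ A ∈ F, (F.filter fun B => Disjoint A B).card ≤ s)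
    (hpair : ∀ e ∈ F, ∀ x ∈ e, ∀ y ∈ e, x ≠ y → ∃ g ∈ F, x ∉ g ∧ y ∉ g)
    {e : Finset α} (he : e ∈ F) {x y : α} (hx : x ∈ e) (hy : y ∈ e) (hxy : x ≠ y) :
    cod F x y ≤ s + 3 := by
  obtain ⟨g, hg, hxg, hyg⟩ := hpair e he x hx y hy hxy
  set L := F.filter (fun h => x ∈ h ∧ y ∈ h) with hL
  have h1 : (L.filter (fun h => Disjoint g h)).card + (L.filter (fun h => ¬ Disjoint g h)).card
      = cod F x y := card_filter_add_card_filter_not _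
  have h2 : (L.filter (fun h => Disjoint g h)) ⊆ F.filter (fun B => Disjoint g B) := by
    intro h hh; simp only [hL, mem_filter] at hh ⊢; exact ⟨hh.1.1, hh.2⟩
  have h3 : (L.filter (fun h => ¬ Disjoint g h))
      ⊆ g.biUnion (fun z => F.filter (fun h => x ∈ h ∧ y ∈ h ∧ z ∈ h)) := by
    intro h hh
    simp only [hL, mem_filter] at hh
    obtain ⟨z, hz, hzh⟩ := Finset.not_disjoint_iff.mp hh.2
    exact mem_biUnion.mpr ⟨z, hz, mem_filter.mpr ⟨hh.1.1, hh.1.2.1, hh.1.2.2, hzh⟩⟩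
  have h4 : (g.biUnion (fun z => F.filter (fun h => x ∈ h ∧ y ∈ h ∧ z ∈ h))).card ≤ 3 := by
    refine card_biUnion_le.trans ?_
    calc ∑ z ∈ g, (F.filter (fun h => x ∈ h ∧ y ∈ h ∧ z ∈ h)).card
        ≤ ∑ _z ∈ g, 1 := by
          apply Finset.sum_le_sum
          intro z hz
          exact card_triple_le_one_ huniform hxy (fun h => hxg (h ▸ hz)) (fun h => hyg (h ▸ hz))
      _ = 3 := by rw [Finset.sum_const, huniform g hg, smul_eq_mul, mul_one]
  have h5 := (card_le_card h2).trans (hai g hg)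
  have h6 := (card_le_card h3).trans h4
  omega

/-- L4 : degree bound. -/
lemma L4 {s : ℕ} {F : Finset (Finset α)}
    (huniform : ∀ A ∈ F, A.card = 3)
    (hai : ∀ A ∈ F, (F.filter fun B => Disjoint A B).card ≤ s)
    (hpair : ∀ e ∈ F, ∀ x ∈ e, ∀ y ∈ e, x ≠ y → ∃ g ∈ F, x ∉ g ∧ y ∉ g)
    {e : Finset α} (he : e ∈ F) {v : α} (hv : v ∈ e) :
    deg F v ≤ 4 * s + 9 := by
  have h1 : 1 < e.card := by rw [huniform e he]; omega
  obtain ⟨y, hy, hyv⟩ := Finset.exists_mem_ne h1 v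
  obtain ⟨g, hg, hvg, -⟩ := hpair e he v hv y hy (Ne.symm hyv)
  have h2 := L6 hai hg hvg
  have h3 : ∑ w ∈ g, cod F v w ≤ 3 * (s + 3) := by
    calc ∑ w ∈ g, cod F v w ≤ ∑ _w ∈ g, (s+3) := by
          apply Finset.sum_le_sum
          intro w hw
          by_cases hc : cod F v w = 0
          · omega
          · obtain ⟨h, hh⟩ := Finset.card_pos.mp (Nat.pos_of_ne_zero hc)
            simp only [mem_filter] at hh
            exact L2 huniform hai hpair hh.1 hh.2.1 hh.2.2 (fun hvw => hvg (hvw ▸ hw))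
      _ = 3 * (s+3) := by rw [Finset.sum_const, huniform g hg, smul_eq_mul]
  omega


/-- codegree vs an edge avoiding the pair -/
lemma cod_le_three_add {F : Finset (Finset α)} (huniform : ∀ A ∈ F, A.card = 3)
    {g : Finset α} (hg : g ∈ F) {x y : α} (hxy : x ≠ y) (hxg : x ∉ g) (hyg : y ∉ g) :
    cod F x y ≤ 3 + ((F.filter (fun h => x ∈ h ∧ y ∈ h)).filter (fun h => Disjoint g h)).card := by
  set L := F.filter (fun h => x ∈ h ∧ y ∈ h) with hLdef
  have h1 : (L.filter (fun h => Disjoint g h)).card + (L.filter (fun h => ¬ Disjoint g h)).card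
      = cod F x y := card_filter_add_card_filter_not _
  have h3 : L.filter (fun h => ¬ Disjoint g h)
      ⊆ g.biUnion (fun z => F.filter (fun h => x ∈ h ∧ y ∈ h ∧ z ∈ h)) := by
    intro h hh
    simp only [hLdef, mem_filter] at hh
    obtain ⟨z, hz, hzh⟩ := Finset.not_disjoint_iff.mp hh.2
    exact mem_biUnion.mpr ⟨z, hz, mem_filter.mpr ⟨hh.1.1, hh.1.2.1, hh.1.2.2, hzh⟩⟩
  have h4 : (g.biUnion (fun z => F.filter (fun h => x ∈ h ∧ y ∈ h ∧ z ∈ h))).card ≤ 3 := by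
    refine card_biUnion_le.trans ?_
    calc ∑ z ∈ g, (F.filter (fun h => x ∈ h ∧ y ∈ h ∧ z ∈ h)).card
        ≤ ∑ _z ∈ g, 1 := by
          apply Finset.sum_le_sum
          intro z hz
          exact card_triple_le_one_ huniform hxy (fun h => hxg (h ▸ hz)) (fun h => hyg (h ▸ hz))
      _ = 3 := by rw [Finset.sum_const, huniform g hg, smul_eq_mul, mul_one]
  have h6 := (card_le_card h3).trans h4
  omega

/-- L7 : disjointness double count. -/
lemma L7 {s : ℕ} {F : Finset (Finset α)} (huniform : ∀ A ∈ F, A.card = 3)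
    (hai : ∀ A ∈ F, (F.filter fun B => Disjoint A B).card ≤ s)
    {x y : α} (hxy : x ≠ y) :
    mis F x y * cod F x y ≤ 3 * mis F x y + cod F x y * s := by
  set L := F.filter (fun h => x ∈ h ∧ y ∈ h) with hLdef
  set M := F.filter (fun g => x ∉ g ∧ y ∉ g) with hMdef
  have step1 : ∀ g ∈ M, cod F x y ≤ 3 + (L.filter (fun h => Disjoint g h)).card := by
    intro g hgM
    simp only [hMdef, mem_filter] at hgM
    exact cod_le_three_add huniform hgM.1 hxy hgM.2.1 hgM.2.2
  have step2 : M.card * cod F x y ≤ 3 * M.card + ∑ g ∈ M, (L.filter (fun h => Disjoint g h)).card := by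
    have := Finset.sum_le_sum step1
    rw [Finset.sum_const, Finset.sum_add_distrib, Finset.sum_const, smul_eq_mul] at this
    simpa [mul_comm, smul_eq_mul] using this
  have swap : ∑ g ∈ M, (L.filter (fun h => Disjoint g h)).card
      = ∑ h ∈ L, (M.filter (fun g => Disjoint g h)).card := by
    simp only [Finset.card_filter]
    exact Finset.sum_comm
  have step3 : ∑ h ∈ L, (M.filter (fun g => Disjoint g h)).card ≤ cod F x y * s := by
    have hb : ∀ h ∈ L, (M.filter (fun g => Disjoint g h)).card ≤ s := by
      intro h hh
      simp only [hLdef, mem_filter] at hh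
      refine (card_le_card ?_).trans (hai h hh.1)
      intro g hgm
      simp only [hMdef, mem_filter] at hgm ⊢
      exact ⟨hgm.1.1, hgm.2.symm⟩
    calc ∑ h ∈ L, (M.filter (fun g => Disjoint g h)).card ≤ ∑ _h ∈ L, s :=
          Finset.sum_le_sum hb
      _ = cod F x y * s := by
          rw [Finset.sum_const, smul_eq_mul]
          congr 1
  rw [show mis F x y = M.card from rfl]
  omega

/-- L8 : two heavy pairs sharing a vertex cannot both avoid an edge. -/
lemma L8 {s : ℕ} {F : Finset (Finset α)} (huniform : ∀ A ∈ F, A.card = 3)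
    (hai : ∀ A ∈ F, (F.filter fun B => Disjoint A B).card ≤ s)
    {z b b' : α} (hzb : z ≠ b) (hzb' : z ≠ b') (hbb' : b ≠ b')
    {e : Finset α} (he : e ∈ F) (hz : z ∉ e) (hb : b ∉ e) (hb' : b' ∉ e) :
    cod F z b + cod F z b' ≤ s + 7 := by
  set S1 := (F.filter (fun h => z ∈ h ∧ b ∈ h)).filter (fun h => Disjoint e h) with hS1
  set S2 := (F.filter (fun h => z ∈ h ∧ b' ∈ h)).filter (fun h => Disjoint e h) with hS2
  have hc1 : cod F z b ≤ 3 + S1.card := cod_le_three_add huniform he hzb hz hb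
  have hc2 : cod F z b' ≤ 3 + S2.card := cod_le_three_add huniform he hzb' hz hb'
  have hsub : S1 ∪ S2 ⊆ F.filter (fun B => Disjoint e B) := by
    intro h hh
    rcases mem_union.mp hh with h1 | h1 <;>
    · simp only [hS1, hS2, mem_filter] at h1 ⊢
      exact ⟨h1.1.1, h1.2⟩
  have hunion : (S1 ∪ S2).card + (S1 ∩ S2).card = S1.card + S2.card :=
    card_union_add_card_inter _ _
  have hint : (S1 ∩ S2).card ≤ 1 := by
    refine le_trans (card_le_card ?_) (card_triple_le_one_ huniform hzb hzb' hbb')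
    intro h hh
    simp only [mem_inter, hS1, hS2, mem_filter] at hh
    simp only [mem_filter]
    exact ⟨hh.1.1.1, hh.1.1.2.1, hh.1.1.2.2, hh.2.1.2.2⟩
  have := (card_le_card hsub).trans (hai e he)
  omega


-- new material
lemma cod_comm (F : Finset (Finset α)) (x y : α) : cod F x y = cod F y x := by
  unfold cod
  congr 1
  apply filter_congr
  intro e _
  constructor <;> (intro h; exact ⟨h.2, h.1⟩)

/-- cod ≥ 1 gives an edge containing both -/
lemma cod_pos_edge {F : Finset (Finset α)} {x y : α} (h : 1 ≤ cod F x y) :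
    ∃ e ∈ F, x ∈ e ∧ y ∈ e := by
  obtain ⟨e, he⟩ := Finset.card_pos.mp h
  simp only [mem_filter] at he
  exact ⟨e, he.1, he.2⟩

lemma cod_le_any {s : ℕ} {F : Finset (Finset α)}
    (huniform : ∀ A ∈ F, A.card = 3)
    (hai : ∀ A ∈ F, (F.filter fun B => Disjoint A B).card ≤ s)
    (hpair : ∀ e ∈ F, ∀ x ∈ e, ∀ y ∈ e, x ≠ y → ∃ g ∈ F, x ∉ g ∧ y ∉ g)
    (x y : α) (hxy : x ≠ y) : cod F x y ≤ s + 3 := by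
  by_cases h : 1 ≤ cod F x y
  · obtain ⟨e, he, hx, hy⟩ := cod_pos_edge h
    exact L2 huniform hai hpair he hx hy hxy
  · omega

/-- pigeonhole on a 3-element set -/
lemma exists_part3 {e : Finset α} (h3 : e.card = 3) (f : α → ℕ) (D t : ℕ)
    (h : D ≤ t + ∑ v ∈ e, f v) : ∃ v ∈ e, D ≤ t + 3 * f v := by
  by_contra hc
  push_neg at hc
  have hne : e.Nonempty := Finset.card_pos.mp (by omega)
  have h1 : ∑ v ∈ e, (t + 3 * f v) < ∑ _v ∈ e, D := by
    apply Finset.sum_lt_sum_of_nonempty hne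
    intro v hv
    exact hc v hv
  have e1 : ∑ _v ∈ e, D = 3 * D := by rw [Finset.sum_const, h3]; simp [mul_comm]
  have e2 : ∑ v ∈ e, (t + 3 * f v) = 3 * t + 3 * ∑ v ∈ e, f v := by
    rw [Finset.sum_add_distrib, Finset.sum_const, h3, Finset.mul_sum]
    simp [mul_comm]
  omega

lemma mis_le6 {s : ℕ} {F : Finset (Finset α)} (hs : 625 < s)
    (huniform : ∀ A ∈ F, A.card = 3)
    (hai : ∀ A ∈ F, (F.filter fun B => Disjoint A B).card ≤ s)
    {x y : α} (hxy : x ≠ y) (hc : s + 8 ≤ 2 * cod F x y) : mis F x y ≤ s + 6 := by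
  by_contra hm
  push_neg at hm
  obtain ⟨k, hk⟩ : ∃ k, mis F x y = s + 7 + k := ⟨mis F x y - (s + 7), by omega⟩
  have h7 := L7 (s := s) huniform hai hxy
  set c := cod F x y with hcdef
  have B1 : mis F x y * c = s * c + 7 * c + k * c := by rw [hk]; ring
  have B2 : 3 * mis F x y = 3 * s + 21 + 3 * k := by rw [hk]; ring
  have B3 : c * s = s * c := mul_comm c s
  have B4 : 3 * k ≤ k * c := by
    have h3 : 3 ≤ c := by omega
    calc 3 * k = k * 3 := by ring
      _ ≤ k * c := Nat.mul_le_mul_left k h3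
  omega

lemma mis_le14 {s : ℕ} {F : Finset (Finset α)} (hs : 625 < s)
    (huniform : ∀ A ∈ F, A.card = 3)
    (hai : ∀ A ∈ F, (F.filter fun B => Disjoint A B).card ≤ s)
    {x y : α} (hxy : x ≠ y) (hc : 2 * s + 10 ≤ 9 * cod F x y) : mis F x y ≤ s + 14 := by
  by_contra hm
  push_neg at hm
  obtain ⟨k, hk⟩ : ∃ k, mis F x y = s + 15 + k := ⟨mis F x y - (s + 15), by omega⟩
  have h7 := L7 (s := s) huniform hai hxy
  set c := cod F x y with hcdef
  have B1 : mis F x y * c = s * c + 15 * c + k * c := by rw [hk]; ring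
  have B2 : 3 * mis F x y = 3 * s + 45 + 3 * k := by rw [hk]; ring
  have B3 : c * s = s * c := mul_comm c s
  have B4 : 3 * k ≤ k * c := by
    have h3 : 3 ≤ c := by omega
    calc 3 * k = k * 3 := by ring
      _ ≤ k * c := Nat.mul_le_mul_left k h3
  omega


/-- from `e ∩ A = p` (2-set) and `x` the vertex outside: `e = insert x p`. -/
lemma edge_eq_insert {A e p : Finset α} {x : α}
    (hp : e ∩ A = p) (hx : e \ A = {x}) : e = insert x p := by
  have h := Finset.sdiff_union_inter e A
  rw [hp, hx] at h
  rw [← h, insert_eq]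

lemma sdiff_card_one {e A : Finset α} (he3 : e.card = 3) (h2 : (e ∩ A).card = 2) :
    ∃ x, e \ A = {x} := by
  have h := Finset.card_sdiff_add_card_inter e A
  rw [he3, h2] at h
  exact Finset.card_eq_one.mp (by omega)

/-- The endgame: once we know every edge has at least 2 vertices in a 4-set `A`,
the exact structure follows. -/
lemma endgame {s : ℕ} {F : Finset (Finset α)} (hs : 625 < s)
    (huniform : ∀ A ∈ F, A.card = 3)
    (hai : ∀ A ∈ F, (F.filter fun B => Disjoint A B).card ≤ s)
    (hpair : ∀ e ∈ F, ∀ x ∈ e, ∀ y ∈ e, x ≠ y → ∃ g ∈ F, x ∉ g ∧ y ∉ g)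
    (hcard : F.card = 6 * s + 10)
    (A : Finset α) (hA4 : A.card = 4)
    (hA2 : ∀ e ∈ F, 2 ≤ (e ∩ A).card) :
    ∃ (B : Finset α) (f : Finset α → Finset α),
      Disjoint A B ∧ s + 1 ≤ B.card ∧
      (∀ S ∈ A.powersetCard 2, f S ⊆ B ∧ (f S).card = s + 1 ∧ f S = f (A \ S)) ∧
      F = ((A.powersetCard 2).biUnion fun S => (f S).image fun x => insert x S) ∪
        A.powersetCard 3 := by
  classical
  set pc2 := A.powersetCard 2 with hpc2
  set pc3 := A.powersetCard 3 with hpc3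
  have hpc2card : pc2.card = 6 := by rw [hpc2, card_powersetCard, hA4]; decide
  have hpc3card : pc3.card = 4 := by rw [hpc3, card_powersetCard, hA4]; decide
  have hP2 : ∀ p ∈ pc2, p ⊆ A ∧ p.card = 2 := by
    intro p hp; exact mem_powersetCard.mp hp
  -- interAcard ∈ {2,3}
  have hcap : ∀ e ∈ F, (e ∩ A).card = 2 ∨ (e ∩ A).card = 3 := by
    intro e he
    have h1 := hA2 e he
    have h2 : (e ∩ A).card ≤ 3 := by
      calc (e ∩ A).card ≤ e.card := card_le_card (inter_subset_left)
        _ = 3 := huniform e he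
    omega
  have hmaps : ∀ e ∈ F, e ∩ A ∈ pc2 ∪ pc3 := by
    intro e he
    rcases hcap e he with h | h
    · exact mem_union_left _ (mem_powersetCard.mpr ⟨inter_subset_right, h⟩)
    · exact mem_union_right _ (mem_powersetCard.mpr ⟨inter_subset_right, h⟩)
  set out : Finset α → ℕ := fun p => (F.filter (fun e => e ∩ A = p)).card with hout
  have hfib : ∑ p ∈ pc2 ∪ pc3, out p = F.card :=
    (Finset.card_eq_sum_card_fiberwise hmaps).symm
  have hdisj23 : Disjoint pc2 pc3 := by
    rw [Finset.disjoint_left]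
    intro p h2 h3
    rw [hpc2, mem_powersetCard] at h2
    rw [hpc3, mem_powersetCard] at h3
    omega
  rw [Finset.sum_union hdisj23] at hfib
  -- triple fibers
  have htrip : ∀ p ∈ pc3, ∀ e ∈ F, e ∩ A = p → e = p := by
    intro p hp e he hep
    rw [hpc3, mem_powersetCard] at hp
    have hsub : p ⊆ e := hep ▸ inter_subset_left
    exact (Finset.eq_of_subset_of_card_le hsub (by rw [hp.2, huniform e he])).symm
  have htrip1 : ∀ p ∈ pc3, out p ≤ 1 := by
    intro p hp
    apply Finset.card_le_one.mpr
    intro a ha b hb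
    simp only [mem_filter] at ha hb
    rw [htrip p hp a ha.1 ha.2, htrip p hp b hb.1 hb.2]
  have hsum3 : ∑ p ∈ pc3, out p ≤ 4 := by
    calc ∑ p ∈ pc3, out p ≤ ∑ _p ∈ pc3, 1 := Finset.sum_le_sum htrip1
      _ = 4 := by rw [Finset.sum_const, hpc3card, smul_eq_mul, mul_one]
  -- out ≤ cod ≤ s+3
  have houtcod : ∀ p ∈ pc2, out p ≤ s + 3 := by
    intro p hp
    rw [hpc2, mem_powersetCard] at hp
    obtain ⟨u, v, huv, rfl⟩ := Finset.card_eq_two.mp hp.2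
    have hsub : F.filter (fun e => e ∩ A = {u, v}) ⊆ F.filter (fun e => u ∈ e ∧ v ∈ e) := by
      intro e he
      simp only [mem_filter] at he ⊢
      refine ⟨he.1, ?_, ?_⟩
      · have : u ∈ e ∩ A := he.2 ▸ (by simp)
        exact (mem_inter.mp this).1
      · have : v ∈ e ∩ A := he.2 ▸ (by simp)
        exact (mem_inter.mp this).1
    exact (card_le_card hsub).trans (cod_le_any huniform hai hpair u v huv)
  -- every pair has an edge
  have houtpos : ∀ p ∈ pc2, 1 ≤ out p := by
    intro p hp
    by_contra hzero
    push_neg at hzero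
    have h0 : out p = 0 := by omega
    have hsum2 : ∑ q ∈ pc2, out q ≤ 5 * (s + 3) := by
      have h1 : ∑ q ∈ pc2, out q = ∑ q ∈ pc2.erase p, out q + out p :=
        (Finset.sum_erase_add _ _ hp).symm
      have h2 : ∑ q ∈ pc2.erase p, out q ≤ (pc2.erase p).card * (s + 3) := by
        apply Finset.sum_le_card_nsmul
        intro q hq
        exact houtcod q (mem_of_mem_erase hq)
      rw [card_erase_of_mem hp, hpc2card] at h2
      have hb : (pc2.erase p).sum out = ∑ q ∈ pc2.erase p, out q := rfl
      have hb2 : (6 - 1) • (s + 3) = 5 * (s + 3) := by simp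
      omega
    omega
  -- opposite pair in pc2
  have hopp : ∀ p ∈ pc2, A \ p ∈ pc2 := by
    intro p hp
    rw [hpc2, mem_powersetCard] at hp ⊢
    refine ⟨sdiff_subset, ?_⟩
    rw [card_sdiff_of_subset hp.1, hA4, hp.2]
  -- out ≤ s + 1
  have houts1 : ∀ p ∈ pc2, out p ≤ s + 1 := by
    intro p hp
    have hpA := (hP2 p hp).1
    have hp2 := (hP2 p hp).2
    obtain ⟨e, he⟩ := Finset.card_pos.mp (houtpos (A \ p) (hopp p hp))
    simp only [mem_filter] at he
    obtain ⟨heF, heA⟩ := he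
    have heA2 : (e ∩ A).card = 2 := by rw [heA, card_sdiff_of_subset hpA, hA4, hp2]
    obtain ⟨x, hx⟩ := sdiff_card_one (huniform e heF) heA2
    have hsubD : F.filter (fun h => h ∩ A = p) ⊆
        (F.filter (fun B => Disjoint e B)) ∪ {insert x p} := by
      intro h hh
      simp only [mem_filter] at hh
      by_cases hd : Disjoint e h
      · exact mem_union_left _ (mem_filter.mpr ⟨hh.1, hd⟩)
      · apply mem_union_right
        obtain ⟨z, hze, hzh⟩ := Finset.not_disjoint_iff.mp hd
        have hzA : z ∉ A := by
          intro hzA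
          have h1 : z ∈ e ∩ A := mem_inter.mpr ⟨hze, hzA⟩
          have h2 : z ∈ h ∩ A := mem_inter.mpr ⟨hzh, hzA⟩
          rw [heA] at h1
          rw [hh.2] at h2
          exact (mem_sdiff.mp h1).2 h2
        have hzx : z = x := by
          have : z ∈ e \ A := mem_sdiff.mpr ⟨hze, hzA⟩
          rw [hx] at this
          exact mem_singleton.mp this
        obtain ⟨x', hx'⟩ := sdiff_card_one (huniform h hh.1) (by rw [hh.2, hp2])
        have hzx' : z = x' := by
          have : z ∈ h \ A := mem_sdiff.mpr ⟨hzh, hzA⟩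
          rw [hx'] at this
          exact mem_singleton.mp this
        have : h = insert x' p := edge_eq_insert hh.2 hx'
        rw [mem_singleton, this, ← hzx', hzx]
    have hcard1 := (card_le_card hsubD).trans (card_union_le _ _)
    have hhai := hai e heF
    simp only [card_singleton] at hcard1
    have hbr : out p = (F.filter (fun h => h ∩ A = p)).card := rfl
    omega
  -- forcing equalities
  have hsum2' : ∑ p ∈ pc2, out p ≤ 6 * (s + 1) := by
    have := Finset.sum_le_card_nsmul pc2 out (s+1) houts1
    rw [hpc2card] at this
    have hb : pc2.sum out = ∑ q ∈ pc2, out q := rfl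
    have hb2 : 6 • (s + 1) = 6 * (s + 1) := by simp
    omega
  have hsum3' : ∑ p ∈ pc3, out p = 4 := by omega
  have hsum2'' : ∑ p ∈ pc2, out p = 6 * (s + 1) := by omega
  have houteq : ∀ p ∈ pc2, out p = s + 1 := by
    intro p hp
    have h1 : ∑ q ∈ pc2, out q = ∑ q ∈ pc2.erase p, out q + out p :=
      (Finset.sum_erase_add _ _ hp).symm
    have h2 : ∑ q ∈ pc2.erase p, out q ≤ 5 * (s + 1) := by
      have := Finset.sum_le_card_nsmul (pc2.erase p) out (s+1)
        (fun q hq => houts1 q (mem_of_mem_erase hq))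
      rw [card_erase_of_mem hp, hpc2card] at this
      have hb : (pc2.erase p).sum out = ∑ q ∈ pc2.erase p, out q := rfl
      have hb2 : (6 - 1) • (s + 1) = 5 * (s + 1) := by simp
      omega
    have := houts1 p hp
    omega
  have htripeq : ∀ p ∈ pc3, out p = 1 := by
    intro p hp
    by_contra hne
    have h0 : out p = 0 := by have := htrip1 p hp; omega
    have h1 : ∑ q ∈ pc3, out q = ∑ q ∈ pc3.erase p, out q + out p :=
      (Finset.sum_erase_add _ _ hp).symm
    have h2 : ∑ q ∈ pc3.erase p, out q ≤ 3 * 1 := by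
      have := Finset.sum_le_card_nsmul (pc3.erase p) out 1
        (fun q hq => htrip1 q (mem_of_mem_erase hq))
      rw [card_erase_of_mem hp, hpc3card] at this
      have hb : (pc3.erase p).sum out = ∑ q ∈ pc3.erase p, out q := rfl
      have hb2 : (4 - 1) • 1 = 3 := by simp
      omega
    omega
  have htripF : ∀ p ∈ pc3, p ∈ F := by
    intro p hp
    have := htripeq p hp
    obtain ⟨e, he⟩ := Finset.card_pos.mp (by omega : 0 < out p)
    simp only [mem_filter] at he
    rw [← htrip p hp e he.1 he.2]
    exact he.1
  -- links
  set Lnk : Finset α → Finset α :=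
    fun p => (F.filter (fun e => e ∩ A = p)).biUnion (fun e => e \ A) with hLnk
  have hLnkA : ∀ p, ∀ x ∈ Lnk p, x ∉ A := by
    intro p x hx
    simp only [hLnk, mem_biUnion, mem_sdiff, mem_filter] at hx
    obtain ⟨e, _, _, h⟩ := hx
    exact h
  have hLnkmem : ∀ p ∈ pc2, ∀ x, x ∈ Lnk p ↔ (insert x p ∈ F ∧ x ∉ A) := by
    intro p hp x
    constructor
    · intro hx
      simp only [hLnk, mem_biUnion, mem_filter] at hx
      obtain ⟨e, ⟨heF, heA⟩, hxe⟩ := hx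
      obtain ⟨x', hx'⟩ := sdiff_card_one (huniform e heF)
        (by rw [heA, (hP2 p hp).2])
      have : x = x' := by rw [hx'] at hxe; exact mem_singleton.mp hxe
      subst this
      rw [← edge_eq_insert heA hx']
      exact ⟨heF, (mem_sdiff.mp (hx' ▸ mem_singleton_self x : x ∈ e \ A)).2⟩
    · rintro ⟨hF, hxA⟩
      simp only [hLnk, mem_biUnion, mem_filter]
      refine ⟨insert x p, ⟨hF, ?_⟩, ?_⟩
      · rw [insert_inter_of_notMem hxA]
        exact inter_eq_left.mpr (hP2 p hp).1
      · exact mem_sdiff.mpr ⟨mem_insert_self x p, hxA⟩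
  have hLnkcard : ∀ p ∈ pc2, (Lnk p).card = s + 1 := by
    intro p hp
    have : (Lnk p).card = out p := by
      rw [hLnk]
      rw [Finset.card_biUnion]
      · have h1 : ∀ e ∈ F.filter (fun e => e ∩ A = p), (e \ A).card = 1 := by
          intro e he
          simp only [mem_filter] at he
          obtain ⟨x, hx⟩ := sdiff_card_one (huniform e he.1)
            (by rw [he.2, (hP2 p hp).2])
          rw [hx, card_singleton]
        rw [Finset.sum_congr rfl h1, Finset.sum_const, smul_eq_mul, mul_one]
      · intro e he e' he' hne
        simp only [coe_filter, mem_filter, Set.mem_setOf_eq] at he he'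
        obtain ⟨x, hx⟩ := sdiff_card_one (huniform e he.1)
          (by rw [he.2, (hP2 p hp).2])
        obtain ⟨x', hx'⟩ := sdiff_card_one (huniform e' he'.1)
          (by rw [he'.2, (hP2 p hp).2])
        rw [Function.onFun, hx, hx']
        simp only [disjoint_singleton]
        intro heq
        apply hne
        rw [edge_eq_insert he.2 hx, edge_eq_insert he'.2 hx', heq]
    rw [this]
    exact houteq p hp
  -- link symmetry
  have hLnksub : ∀ p ∈ pc2, Lnk p ⊆ Lnk (A \ p) := by
    intro p hp x hx
    have hpA : p ⊆ A := (hP2 p hp).1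
    rw [hLnkmem p hp] at hx
    obtain ⟨heF, hxA⟩ := hx
    rw [hLnkmem (A \ p) (hopp p hp)]
    refine ⟨?_, hxA⟩
    by_contra hnot
    -- then all s+1 edges of fiber (A\p) are disjoint from insert x p
    have hdisj : F.filter (fun h => h ∩ A = A \ p) ⊆
        F.filter (fun B => Disjoint (insert x p) B) := by
      intro h hh
      simp only [mem_filter] at hh ⊢
      refine ⟨hh.1, ?_⟩
      rw [Finset.disjoint_left]
      intro z hz hzh
      rcases mem_insert.mp hz with rfl | hzp
      · -- z = x ∈ h : then h = insert x (A \ p) ∈ F, contradiction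
        obtain ⟨x', hx'⟩ := sdiff_card_one (huniform h hh.1)
          (by rw [hh.2, card_sdiff_of_subset hpA, hA4, (hP2 p hp).2])
        have : z = x' := by
          have : z ∈ h \ A := mem_sdiff.mpr ⟨hzh, hxA⟩
          rw [hx'] at this
          exact mem_singleton.mp this
        exact hnot (by rw [← this] at hx'; rw [← edge_eq_insert hh.2 hx']; exact hh.1)
      · -- z ∈ p and z ∈ h : but h ∩ A = A \ p
        have : z ∈ h ∩ A := mem_inter.mpr ⟨hzh, hpA hzp⟩
        rw [hh.2] at this
        exact (mem_sdiff.mp this).2 hzp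
    have h1 := card_le_card hdisj
    have h2 : (F.filter (fun h => h ∩ A = A \ p)).card = s + 1 := houteq _ (hopp p hp)
    have h3 := hai (insert x p) heF
    omega
  have hLnkeq : ∀ p ∈ pc2, Lnk p = Lnk (A \ p) := by
    intro p hp
    apply Finset.Subset.antisymm (hLnksub p hp)
    have h := hLnksub (A \ p) (hopp p hp)
    rwa [Finset.sdiff_sdiff_eq_self (hP2 p hp).1] at h
  -- assemble
  refine ⟨pc2.biUnion Lnk, Lnk, ?_, ?_, ?_, ?_⟩
  · rw [Finset.disjoint_right]
    intro x hx
    simp only [mem_biUnion] at hx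
    obtain ⟨p, hp, hxp⟩ := hx
    exact hLnkA p x hxp
  · have hne : pc2.Nonempty := Finset.card_pos.mp (by omega)
    obtain ⟨p, hp⟩ := hne
    calc s + 1 = (Lnk p).card := (hLnkcard p hp).symm
      _ ≤ (pc2.biUnion Lnk).card := card_le_card (subset_biUnion_of_mem Lnk hp)
  · intro S hS
    exact ⟨subset_biUnion_of_mem Lnk hS, hLnkcard S hS, hLnkeq S hS⟩
  · apply Finset.Subset.antisymm
    · intro e he
      rcases hcap e he with h2 | h3
      · apply mem_union_left
        have hp : e ∩ A ∈ pc2 := by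
          rw [hpc2, mem_powersetCard]; exact ⟨inter_subset_right, h2⟩
        obtain ⟨x, hx⟩ := sdiff_card_one (huniform e he) h2
        apply mem_biUnion.mpr
        refine ⟨e ∩ A, hp, ?_⟩
        apply Finset.mem_image.mpr
        refine ⟨x, ?_, (edge_eq_insert rfl hx).symm⟩
        rw [hLnkmem _ hp]
        rw [← edge_eq_insert rfl hx]
        exact ⟨he, (mem_sdiff.mp (hx ▸ mem_singleton_self x : x ∈ e \ A)).2⟩
      · apply mem_union_right
        have h4 : e ∩ A = e := Finset.eq_of_subset_of_card_le inter_subset_left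
          (by rw [huniform e he, h3])
        exact mem_powersetCard.mpr ⟨Finset.inter_eq_left.mp h4, huniform e he⟩
    · intro e he
      rcases mem_union.mp he with h | h
      · obtain ⟨S, hS, him⟩ := mem_biUnion.mp h
        obtain ⟨x, hx, rfl⟩ := Finset.mem_image.mp him
        exact ((hLnkmem S (hpc2 ▸ hS) x).mp hx).1
      · exact htripF e h


lemma W2False {s : ℕ} {F : Finset (Finset α)} (hs : 625 < s)
    (huniform : ∀ A ∈ F, A.card = 3)
    (hai : ∀ A ∈ F, (F.filter fun B => Disjoint A B).card ≤ s)
    (hpair : ∀ e ∈ F, ∀ x ∈ e, ∀ y ∈ e, x ≠ y → ∃ g ∈ F, x ∉ g ∧ y ∉ g)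
    (hcard : F.card = 6 * s + 10)
    {x₀ w1 w2 : α} (hw1x : w1 ≠ x₀) (hw2x : w2 ≠ x₀) (hw12 : w1 ≠ w2)
    (hd0 : 5 * s + 24 ≤ 2 * deg F x₀)
    (hd0u : deg F x₀ ≤ 4 * s + 9)
    (hc1 : deg F x₀ ≤ s + 3 * cod F x₀ w1)
    (hc2 : deg F x₀ ≤ s + 3 * cod F x₀ w2)
    (hcov : ∀ g ∈ F, x₀ ∉ g → w1 ∈ g ∨ w2 ∈ g)
    (hsmall : ∀ e ∈ F, ∀ u ∈ e, u ≠ x₀ → u ≠ w1 → u ≠ w2 →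
      s + 3 * cod F x₀ u < deg F x₀) :
    False := by
  classical
  set E1 := F.filter (fun e => x₀ ∉ e ∧ w2 ∉ e) with hE1
  set E2 := F.filter (fun e => x₀ ∉ e ∧ w1 ∉ e) with hE2
  set E12 := F.filter (fun e => x₀ ∉ e ∧ w1 ∈ e ∧ w2 ∈ e) with hE12
  have hE1w1 : ∀ e ∈ E1, w1 ∈ e := by
    intro e he
    simp only [hE1, mem_filter] at he
    rcases hcov e he.1 he.2.1 with h | h
    · exact h
    · exact absurd h he.2.2
  have hE2w2 : ∀ e ∈ E2, w2 ∈ e := by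
    intro e he
    simp only [hE2, mem_filter] at he
    rcases hcov e he.1 he.2.1 with h | h
    · exact absurd h he.2.2
    · exact h
  have hc1' : s + 8 ≤ 2 * cod F x₀ w1 := by omega
  have hc2' : s + 8 ≤ 2 * cod F x₀ w2 := by omega
  have hE1card : E1.card ≤ s + 6 := mis_le6 hs huniform hai (Ne.symm hw2x) hc2'
  have hE2card : E2.card ≤ s + 6 := mis_le6 hs huniform hai (Ne.symm hw1x) hc1'
  have hE12card : E12.card ≤ s + 3 := by
    rcases Finset.eq_empty_or_nonempty E12 with h | ⟨e, he⟩
    · rw [h]; simp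
    · simp only [hE12, mem_filter] at he
      have hcod := L2 huniform hai hpair he.1 he.2.2.1 he.2.2.2 hw12
      refine le_trans (card_le_card ?_) hcod
      intro h hh
      simp only [hE12, mem_filter] at hh
      exact mem_filter.mpr ⟨hh.1, hh.2.2⟩
  have hGcard : deg F x₀ + (F.filter (fun e => x₀ ∉ e)).card = F.card :=
    card_filter_add_card_filter_not _
  have hGsub : F.filter (fun e => x₀ ∉ e) ⊆ E1 ∪ E2 ∪ E12 := by
    intro e he
    have heF := (mem_filter.mp he).1
    have hex := (mem_filter.mp he).2
    by_cases h2 : w2 ∈ e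
    · by_cases h1 : w1 ∈ e
      · exact mem_union_right _ (mem_filter.mpr ⟨heF, hex, h1, h2⟩)
      · exact mem_union_left _ (mem_union_right _ (mem_filter.mpr ⟨heF, hex, h1⟩))
    · exact mem_union_left _ (mem_union_left _ (mem_filter.mpr ⟨heF, hex, h2⟩))
  have hGbound := (card_le_card hGsub).trans ((card_union_le _ _).trans
    (add_le_add_left (card_union_le _ _) _))
  have hd03 : 3 * s ≤ deg F x₀ + 5 := by omega
  -- sticky criterion
  have hsticky : ∀ u, u ≠ x₀ → u ≠ w1 → u ≠ w2 → s + 29 ≤ 3 * cod F x₀ u →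
      (∀ e ∈ E1, u ∈ e) ∧ (∀ e ∈ E2, u ∈ e) := by
    intro u hux hu1 hu2 huc
    constructor
    · intro e he
      by_contra hue
      simp only [hE1, mem_filter] at he
      have h8 := L8 huniform hai (Ne.symm hw2x) (Ne.symm hux) (fun h => hu2 h.symm)
        he.1 he.2.1 he.2.2 hue
      omega
    · intro e he
      by_contra hue
      simp only [hE2, mem_filter] at he
      have h8 := L8 huniform hai (Ne.symm hw1x) (Ne.symm hux) (fun h => hu1 h.symm)
        he.1 he.2.1 he.2.2 hue
      omega
  -- E1, E2 nonempty
  have hE1ne : E1.Nonempty := by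
    have hp : 1 ≤ cod F x₀ w2 := by omega
    obtain ⟨e', he', hx', h2'⟩ := cod_pos_edge hp
    obtain ⟨g, hg, hgx, hg2⟩ := hpair e' he' x₀ hx' w2 h2' (Ne.symm hw2x)
    exact ⟨g, mem_filter.mpr ⟨hg, hgx, hg2⟩⟩
  have hE2ne : E2.Nonempty := by
    have hp : 1 ≤ cod F x₀ w1 := by omega
    obtain ⟨e', he', hx', h1'⟩ := cod_pos_edge hp
    obtain ⟨g, hg, hgx, hg1⟩ := hpair e' he' x₀ hx' w1 h1' (Ne.symm hw1x)
    exact ⟨g, mem_filter.mpr ⟨hg, hgx, hg1⟩⟩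
  have hc1u : cod F x₀ w1 ≤ s + 3 := cod_le_any huniform hai hpair _ _ (Ne.symm hw1x)
  have hc2u : cod F x₀ w2 ≤ s + 3 := cod_le_any huniform hai hpair _ _ (Ne.symm hw2x)
  -- find the sticky vertex a
  obtain ⟨gE1, hgE1⟩ := hE1ne
  have hgE1F : gE1 ∈ F ∧ x₀ ∉ gE1 ∧ w2 ∉ gE1 := by
    simpa only [hE1, mem_filter] using hgE1
  have hgw1 : w1 ∈ gE1 := hE1w1 _ hgE1
  have hL6g := L6 hai hgE1F.1 hgE1F.2.1
  have hsplitg : cod F x₀ w1 + ∑ v ∈ gE1.erase w1, cod F x₀ v = ∑ v ∈ gE1, cod F x₀ v :=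
    Finset.add_sum_erase _ _ hgw1
  have hec : (gE1.erase w1).card = 2 := by
    rw [card_erase_of_mem hgw1, huniform _ hgE1F.1]
  obtain ⟨a', b', hab', herase⟩ := Finset.card_eq_two.mp hec
  have hsum2 : ∑ v ∈ gE1.erase w1, cod F x₀ v = cod F x₀ a' + cod F x₀ b' := by
    rw [herase, Finset.sum_pair hab']
  have hbig : ∃ u ∈ gE1.erase w1, cod F x₀ a' + cod F x₀ b' ≤ 2 * cod F x₀ u := by
    rcases le_total (cod F x₀ a') (cod F x₀ b') with h | h
    · exact ⟨b', by rw [herase]; simp, by omega⟩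
    · exact ⟨a', by rw [herase]; simp, by omega⟩
  obtain ⟨a, haer, hamax⟩ := hbig
  have hae : a ∈ gE1 := mem_of_mem_erase haer
  have haw1 : a ≠ w1 := (mem_erase.mp haer).1
  have hax : a ≠ x₀ := fun h => hgE1F.2.1 (h ▸ hae)
  have haw2 : a ≠ w2 := fun h => hgE1F.2.2 (h ▸ hae)
  have hacod : s ≤ 2 * cod F x₀ a + 8 := by omega
  have hastick := hsticky a hax haw1 haw2 (by omega)
  -- the T class
  set T := F.filter (fun e => x₀ ∈ e ∧ w1 ∉ e ∧ w2 ∉ e) with hT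
  have hd0split : deg F x₀ ≤ cod F x₀ w1 + cod F x₀ w2 + T.card := by
    have hsub : F.filter (fun e => x₀ ∈ e) ⊆
        (F.filter (fun e => x₀ ∈ e ∧ w1 ∈ e)) ∪ (F.filter (fun e => x₀ ∈ e ∧ w2 ∈ e)) ∪ T := by
      intro e he
      have heF := (mem_filter.mp he).1
      have hex := (mem_filter.mp he).2
      by_cases h1 : w1 ∈ e
      · exact mem_union_left _ (mem_union_left _ (mem_filter.mpr ⟨heF, hex, h1⟩))
      · by_cases h2 : w2 ∈ e
        · exact mem_union_left _ (mem_union_right _ (mem_filter.mpr ⟨heF, hex, h2⟩))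
        · exact mem_union_right _ (mem_filter.mpr ⟨heF, hex, h1, h2⟩)
    have hb := (card_le_card hsub).trans ((card_union_le _ _).trans
      (add_le_add_left (card_union_le _ _) _))
    have e1 : (F.filter (fun e => x₀ ∈ e ∧ w1 ∈ e)).card = cod F x₀ w1 := rfl
    have e2 : (F.filter (fun e => x₀ ∈ e ∧ w2 ∈ e)).card = cod F x₀ w2 := rfl
    have e3 : (F.filter (fun e => x₀ ∈ e)).card = deg F x₀ := rfl
    omega
  rcases le_or_gt (s + 8) (cod F a w1 + cod F a w2) with hcase | hcase
  · -- 2.8 : every T-edge contains a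
    have hTa : ∀ e ∈ T, a ∈ e := by
      intro e he
      by_contra hane
      simp only [hT, mem_filter] at he
      have h8 := L8 huniform hai haw1 haw2 hw12 he.1 hane he.2.2.1 he.2.2.2
      omega
    have hTcard : T.card ≤ cod F x₀ a := by
      apply card_le_card
      intro e he
      have h := mem_filter.mp he
      exact mem_filter.mpr ⟨h.1, h.2.1, hTa e he⟩
    have hsm := hsmall gE1 hgE1F.1 a hae hax haw1 haw2
    omega
  · -- 2.9
    have hE1a : E1.card ≤ cod F a w1 := by
      apply card_le_card
      intro e he
      exact mem_filter.mpr ⟨(mem_filter.mp he).1, hastick.1 e he, hE1w1 e he⟩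
    have hE2a : E2.card ≤ cod F a w2 := by
      apply card_le_card
      intro e he
      exact mem_filter.mpr ⟨(mem_filter.mp he).1, hastick.2 e he, hE2w2 e he⟩
    have hd04 : 4 * s ≤ deg F x₀ := by omega
    have hc1s : s ≤ cod F x₀ w1 := by omega
    have hc2s : s ≤ cod F x₀ w2 := by omega
    -- third vertices
    obtain ⟨e2', he2'⟩ := hE2ne
    have he2F : e2' ∈ F ∧ x₀ ∉ e2' ∧ w1 ∉ e2' := by
      simpa only [hE2, mem_filter] using he2'
    have he2w2 : w2 ∈ e2' := hE2w2 _ he2'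
    have hae2 : a ∈ e2' := hastick.2 e2' he2'
    have haw2' : a ≠ w2 := haw2
    -- y1 : third vertex of gE1
    have hy1ex : ∃ y, y ∈ gE1 ∧ y ≠ w1 ∧ y ≠ a := by
      have h1 : ((gE1.erase w1).erase a).card = 1 := by
        rw [card_erase_of_mem (mem_erase.mpr ⟨haw1, hae⟩), hec]
      obtain ⟨y, hy⟩ := Finset.card_eq_one.mp h1
      have hymem : y ∈ (gE1.erase w1).erase a := hy ▸ mem_singleton_self y
      exact ⟨y, mem_of_mem_erase (mem_of_mem_erase hymem),
        (mem_erase.mp (mem_of_mem_erase hymem)).1, (mem_erase.mp hymem).1⟩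
    obtain ⟨y1, hy1g, hy1w1, hy1a⟩ := hy1ex
    have hgE1eq : gE1 = {w1, a, y1} :=
      triple_eq_ huniform hgE1F.1 hgw1 hae hy1g (Ne.symm haw1) (Ne.symm hy1w1) (Ne.symm hy1a)
    have hy1x : y1 ≠ x₀ := fun h => hgE1F.2.1 (h ▸ hy1g)
    have hy1w2 : y1 ≠ w2 := fun h => hgE1F.2.2 (h ▸ hy1g)
    -- y2 : third vertex of e2'
    have hy2ex : ∃ y, y ∈ e2' ∧ y ≠ w2 ∧ y ≠ a := by
      have hec2 : (e2'.erase w2).card = 2 := by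
        rw [card_erase_of_mem he2w2, huniform _ he2F.1]
      have h1 : ((e2'.erase w2).erase a).card = 1 := by
        rw [card_erase_of_mem (mem_erase.mpr ⟨haw2, hae2⟩), hec2]
      obtain ⟨y, hy⟩ := Finset.card_eq_one.mp h1
      have hymem : y ∈ (e2'.erase w2).erase a := hy ▸ mem_singleton_self y
      exact ⟨y, mem_of_mem_erase (mem_of_mem_erase hymem),
        (mem_erase.mp (mem_of_mem_erase hymem)).1, (mem_erase.mp hymem).1⟩
    obtain ⟨y2, hy2g, hy2w2, hy2a⟩ := hy2ex
    have he2eq : e2' = {w2, a, y2} :=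
      triple_eq_ huniform he2F.1 he2w2 hae2 hy2g (Ne.symm haw2) (Ne.symm hy2w2) (Ne.symm hy2a)
    have hy2x : y2 ≠ x₀ := fun h => he2F.2.1 (h ▸ hy2g)
    have hy2w1 : y2 ≠ w1 := fun h => he2F.2.2 (h ▸ hy2g)
    -- T is covered by a, y1, y2 through x₀
    have hTsub : T ⊆ (F.filter (fun e => x₀ ∈ e ∧ a ∈ e)) ∪ (F.filter (fun e => x₀ ∈ e ∧ y1 ∈ e))
        ∪ (F.filter (fun e => x₀ ∈ e ∧ y2 ∈ e)) := by
      intro e he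
      have heF := (mem_filter.mp he).1
      obtain ⟨hex, hew1, hew2⟩ := (mem_filter.mp he).2
      -- G-edges hitting e
      have hD := card_filter_add_card_filter_not
        (s := F.filter (fun h => x₀ ∉ h)) (p := fun h => Disjoint e h)
      have hDsub : (F.filter (fun h => x₀ ∉ h)).filter (fun h => Disjoint e h) ⊆
          F.filter (fun B => Disjoint e B) := by
        intro h hh
        simp only [mem_filter] at hh ⊢
        exact ⟨hh.1.1, hh.2⟩
      have hDle := (card_le_card hDsub).trans (hai e heF)
      have hmsub : (F.filter (fun h => x₀ ∉ h)).filter (fun h => ¬ Disjoint e h) ⊆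
          (e.erase x₀).biUnion (fun z => (F.filter (fun h => z ∈ h ∧ w1 ∈ h))
            ∪ (F.filter (fun h => z ∈ h ∧ w2 ∈ h))) := by
        intro h hh
        simp only [mem_filter] at hh
        obtain ⟨⟨hhF, hhx⟩, hhd⟩ := hh
        obtain ⟨z, hze, hzh⟩ := Finset.not_disjoint_iff.mp hhd
        have hzx : z ≠ x₀ := fun hzz => hhx (hzz ▸ hzh)
        refine mem_biUnion.mpr ⟨z, mem_erase.mpr ⟨hzx, hze⟩, ?_⟩
        rcases hcov h hhF hhx with h1 | h1
        · exact mem_union_left _ (mem_filter.mpr ⟨hhF, hzh, h1⟩)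
        · exact mem_union_right _ (mem_filter.mpr ⟨hhF, hzh, h1⟩)
      have hbcard := (card_le_card hmsub).trans card_biUnion_le
      have hecx : (e.erase x₀).card = 2 := by rw [card_erase_of_mem hex, huniform e heF]
      obtain ⟨u, v, huv, herx⟩ := Finset.card_eq_two.mp hecx
      have hsumz : ∑ z ∈ e.erase x₀, ((F.filter (fun h => z ∈ h ∧ w1 ∈ h))
          ∪ (F.filter (fun h => z ∈ h ∧ w2 ∈ h))).card
          ≤ (cod F u w1 + cod F u w2) + (cod F v w1 + cod F v w2) := by
        rw [herx, Finset.sum_pair huv]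
        have t1 := card_union_le (F.filter (fun h => u ∈ h ∧ w1 ∈ h))
          (F.filter (fun h => u ∈ h ∧ w2 ∈ h))
        have t2 := card_union_le (F.filter (fun h => v ∈ h ∧ w1 ∈ h))
          (F.filter (fun h => v ∈ h ∧ w2 ∈ h))
        have r1 : (F.filter (fun h => u ∈ h ∧ w1 ∈ h)).card = cod F u w1 := rfl
        have r2 : (F.filter (fun h => u ∈ h ∧ w2 ∈ h)).card = cod F u w2 := rfl
        have r3 : (F.filter (fun h => v ∈ h ∧ w1 ∈ h)).card = cod F v w1 := rfl
        have r4 : (F.filter (fun h => v ∈ h ∧ w2 ∈ h)).card = cod F v w2 := rfl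
        omega
      have hkey : s + 1 ≤ (cod F u w1 + cod F u w2) + (cod F v w1 + cod F v w2) := by omega
      have hue : u ∈ e := mem_of_mem_erase (by rw [herx]; simp)
      have hve : v ∈ e := mem_of_mem_erase (by rw [herx]; simp)
      have hux : u ≠ x₀ := by
        have : u ∈ e.erase x₀ := by rw [herx]; simp
        exact (mem_erase.mp this).1
      have hvx : v ≠ x₀ := by
        have : v ∈ e.erase x₀ := by rw [herx]; simp
        exact (mem_erase.mp this).1
      have hclaim : ∀ z, z ∈ e → z ≠ x₀ →
          (s + 1 ≤ 4 * cod F z w1 → (z = a ∨ z = y2)) ∧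
          (s + 1 ≤ 4 * cod F z w2 → (z = a ∨ z = y1)) := by
        intro z hze hzx
        have hzw1 : z ≠ w1 := fun h => hew1 (h ▸ hze)
        have hzw2 : z ≠ w2 := fun h => hew2 (h ▸ hze)
        constructor
        · intro hheavy
          have hze2 : z ∈ e2' := by
            by_contra hzz
            have h8 := L8 huniform hai hw1x (Ne.symm hzw1) (fun h => hzx h.symm)
              he2F.1 he2F.2.2 he2F.2.1 hzz
            have hccA : cod F w1 x₀ = cod F x₀ w1 := cod_comm F w1 x₀
            have hccB : cod F w1 z = cod F z w1 := cod_comm F w1 z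
            omega
          rw [he2eq] at hze2
          simp only [mem_insert, mem_singleton] at hze2
          rcases hze2 with h | h | h
          · exact absurd h hzw2
          · exact Or.inl h
          · exact Or.inr h
        · intro hheavy
          have hze1 : z ∈ gE1 := by
            by_contra hzz
            have h8 := L8 huniform hai hw2x (Ne.symm hzw2) (fun h => hzx h.symm)
              hgE1F.1 hgE1F.2.2 hgE1F.2.1 hzz
            have hccA : cod F w2 x₀ = cod F x₀ w2 := cod_comm F w2 x₀
            have hccB : cod F w2 z = cod F z w2 := cod_comm F w2 z
            omega
          rw [hgE1eq] at hze1
          simp only [mem_insert, mem_singleton] at hze1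
          rcases hze1 with h | h | h
          · exact absurd h hzw1
          · exact Or.inl h
          · exact Or.inr h
      simp only [mem_union]
      have hpick : (s + 1 ≤ 4 * cod F u w1) ∨ (s + 1 ≤ 4 * cod F u w2)
          ∨ (s + 1 ≤ 4 * cod F v w1) ∨ (s + 1 ≤ 4 * cod F v w2) := by omega
      rcases hpick with h | h | h | h
      · rcases (hclaim u hue hux).1 h with rfl | rfl
        · exact Or.inl (Or.inl (mem_filter.mpr ⟨heF, hex, hue⟩))
        · exact Or.inr (mem_filter.mpr ⟨heF, hex, hue⟩)
      · rcases (hclaim u hue hux).2 h with rfl | rfl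
        · exact Or.inl (Or.inl (mem_filter.mpr ⟨heF, hex, hue⟩))
        · exact Or.inl (Or.inr (mem_filter.mpr ⟨heF, hex, hue⟩))
      · rcases (hclaim v hve hvx).1 h with rfl | rfl
        · exact Or.inl (Or.inl (mem_filter.mpr ⟨heF, hex, hve⟩))
        · exact Or.inr (mem_filter.mpr ⟨heF, hex, hve⟩)
      · rcases (hclaim v hve hvx).2 h with rfl | rfl
        · exact Or.inl (Or.inl (mem_filter.mpr ⟨heF, hex, hve⟩))
        · exact Or.inl (Or.inr (mem_filter.mpr ⟨heF, hex, hve⟩))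
    -- bound |T|
    have hTb := (card_le_card hTsub).trans ((card_union_le _ _).trans
      (add_le_add_left (card_union_le _ _) _))
    have r5 : (F.filter (fun e => x₀ ∈ e ∧ a ∈ e)).card = cod F x₀ a := rfl
    have r6 : (F.filter (fun e => x₀ ∈ e ∧ y1 ∈ e)).card = cod F x₀ y1 := rfl
    have r7 : (F.filter (fun e => x₀ ∈ e ∧ y2 ∈ e)).card = cod F x₀ y2 := rfl
    have hacodu : cod F x₀ a ≤ s + 3 := cod_le_any huniform hai hpair _ _ (Ne.symm hax)
    -- non-sticky bounds for y1, y2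
    have hybound : ∀ y, y ≠ x₀ → y ≠ w1 → y ≠ w2 → y ≠ a → 3 * cod F x₀ y ≤ s + 28 := by
      intro y hyx hyw1 hyw2 hya
      by_contra hb
      push_neg at hb
      have hst := hsticky y hyx hyw1 hyw2 (by omega)
      have hE1one : E1.card ≤ 1 := by
        refine le_trans (card_le_card ?_) (card_triple_le_one_ huniform
          (Ne.symm haw1) (Ne.symm hyw1) hya.symm)
        intro e he
        exact mem_filter.mpr ⟨(mem_filter.mp he).1, hE1w1 e he, hastick.1 e he, hst.1 e he⟩
      have hE2one : E2.card ≤ 1 := by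
        refine le_trans (card_le_card ?_) (card_triple_le_one_ huniform
          (Ne.symm haw2) (Ne.symm hyw2) hya.symm)
        intro e he
        exact mem_filter.mpr ⟨(mem_filter.mp he).1, hE2w2 e he, hastick.2 e he, hst.2 e he⟩
      omega
    have hT3 : 3 * T.card ≤ 5 * s + 65 := by
      rcases eq_or_ne y1 a with hv1 | hv1
      · rcases eq_or_ne y2 a with hv2 | hv2
        · have hsub' : T ⊆ F.filter (fun e => x₀ ∈ e ∧ a ∈ e) := by
            intro h hh
            have := hTsub hh
            simp only [mem_union] at this
            rcases this with (h' | h') | h'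
            · exact h'
            · rw [hv1] at h'; exact h'
            · rw [hv2] at h'; exact h'
          have := (card_le_card hsub').trans_eq r5
          omega
        · have hsub' : T ⊆ (F.filter (fun e => x₀ ∈ e ∧ a ∈ e))
              ∪ (F.filter (fun e => x₀ ∈ e ∧ y2 ∈ e)) := by
            intro h hh
            have := hTsub hh
            simp only [mem_union] at this ⊢
            rcases this with (h' | h') | h'
            · exact Or.inl h'
            · rw [hv1] at h'; exact Or.inl h'
            · exact Or.inr h'
          have hcu := (card_le_card hsub').trans (card_union_le _ _)
          have hb2 := hybound y2 hy2x hy2w1 hy2w2 hv2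
          omega
      · rcases eq_or_ne y2 a with hv2 | hv2
        · have hsub' : T ⊆ (F.filter (fun e => x₀ ∈ e ∧ a ∈ e))
              ∪ (F.filter (fun e => x₀ ∈ e ∧ y1 ∈ e)) := by
            intro h hh
            have := hTsub hh
            simp only [mem_union] at this ⊢
            rcases this with (h' | h') | h'
            · exact Or.inl h'
            · exact Or.inr h'
            · rw [hv2] at h'; exact Or.inl h'
          have hcu := (card_le_card hsub').trans (card_union_le _ _)
          have hb1 := hybound y1 hy1x hy1w1 hy1w2 hv1
          omega
        · have hb1 := hybound y1 hy1x hy1w1 hy1w2 hv1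
          have hb2 := hybound y2 hy2x hy2w1 hy2w2 hv2
          omega
    omega


end Stmt17

open Finset Stmt17 in
/-- Let `s > 625` and let `F` be a 3-uniform `[0,s]`-almost intersecting
hypergraph such that for every edge `e ∈ F` and every two vertices `x, y ∈ e`, some edge of
`F` is disjoint from `{x,y}`. If `F` has exactly `6s+10` edges, then `F` is a hypergraph of
the form `M_f` together with all four 3-element subsets of the 4-element core `A`. -/
theorem stmt_17 {α : Type*} [DecidableEq α] (s : ℕ) (hs : 625 < s)
    (F : Finset (Finset α))
    (huniform : ∀ A ∈ F, A.card = 3)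
    (hai : ∀ A ∈ F, (F.filter fun B => Disjoint A B).card ≤ s)
    (hpair : ∀ e ∈ F, ∀ x ∈ e, ∀ y ∈ e, x ≠ y → ∃ g ∈ F, x ∉ g ∧ y ∉ g)
    (hcard : F.card = 6 * s + 10) :
    ∃ (A B : Finset α) (f : Finset α → Finset α),
      Disjoint A B ∧ A.card = 4 ∧ s + 1 ≤ B.card ∧
      (∀ S ∈ A.powersetCard 2, f S ⊆ B ∧ (f S).card = s + 1 ∧ f S = f (A \ S)) ∧
      F = ((A.powersetCard 2).biUnion fun S => (f S).image fun x => insert x S) ∪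
        A.powersetCard 3 := by
  classical
  have hF : F.Nonempty := Finset.card_pos.mp (by omega)
  obtain ⟨e₀, he₀⟩ := hF
  -- a vertex of large degree
  have h5 := L5 hai he₀
  obtain ⟨x1, hx1e, hx1⟩ := exists_part3 (huniform e₀ he₀) (deg F) F.card s h5
  -- an edge avoiding x1
  obtain ⟨y, hy, hyx⟩ := Finset.exists_mem_ne (by rw [huniform e₀ he₀]; omega) x1
  obtain ⟨g0, hg0, hx1g0, -⟩ := hpair e₀ he₀ x1 hx1e y hy (Ne.symm hyx)
  obtain ⟨w, hwg, hw⟩ := exists_part3 (huniform g0 hg0) (cod F x1) (deg F x1) s (L6 hai hg0 hx1g0)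
  have hx1w : x1 ≠ w := fun h => hx1g0 (h ▸ hwg)
  have hcodw : 2 * s + 10 ≤ 9 * cod F x1 w := by omega
  have hmw := mis_le14 hs huniform hai hx1w hcodw
  have hid := L3 F x1 w
  -- the max-degree vertex
  set V := F.biUnion id with hV
  have hVmem : ∀ e ∈ F, ∀ v ∈ e, v ∈ V := fun e he v hv => mem_biUnion.mpr ⟨e, he, hv⟩
  obtain ⟨x₀, hx₀V, hx₀max⟩ := Finset.exists_max_image V (deg F) ⟨x1, hVmem _ he₀ _ hx1e⟩
  have hd0 : 5 * s + 24 ≤ 2 * deg F x₀ := by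
    have h1 := hx₀max x1 (hVmem _ he₀ _ hx1e)
    have h2 := hx₀max w (hVmem _ hg0 _ hwg)
    omega
  obtain ⟨ex₀, hex₀, hx₀e⟩ := mem_biUnion.mp hx₀V
  have hd0u : deg F x₀ ≤ 4 * s + 9 := L4 huniform hai hpair hex₀ hx₀e
  -- edges avoiding x₀
  have hGcard : deg F x₀ + (F.filter (fun e => x₀ ∉ e)).card = F.card := by
    have := card_filter_add_card_filter_not (s := F) (p := fun e => x₀ ∈ e)
    exact this
  have hGpos : 2 * s + 1 ≤ (F.filter (fun e => x₀ ∉ e)).card := by omega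
  -- the set W
  set W := V.filter (fun u => u ≠ x₀ ∧ deg F x₀ ≤ s + 3 * cod F x₀ u) with hW
  have hWmem : ∀ u ∈ W, u ≠ x₀ ∧ deg F x₀ ≤ s + 3 * cod F x₀ u :=
    fun u hu => (mem_filter.mp hu).2
  have hcover : ∀ g ∈ F, x₀ ∉ g → ∃ u ∈ g, u ∈ W := by
    intro g hg hx₀g
    obtain ⟨u, hug, hu⟩ := exists_part3 (huniform g hg) (cod F x₀) (deg F x₀) s (L6 hai hg hx₀g)
    exact ⟨u, hug, mem_filter.mpr ⟨hVmem _ hg _ hug, fun h => hx₀g (h ▸ hug), hu⟩⟩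
  have hKEY : ∀ e ∈ F, x₀ ∉ e → ∀ u ∈ W, ∀ u' ∈ W, u ≠ u' → u ∉ e → u' ∉ e → False := by
    intro e he hx₀e' u hu u' hu' hne hue hu'e
    have h1 := (hWmem u hu).2
    have h2 := (hWmem u' hu').2
    have h8 := L8 huniform hai ((hWmem u hu).1.symm) ((hWmem u' hu').1.symm) hne he hx₀e' hue hu'e
    omega
  have hWcap : ∀ g ∈ F, x₀ ∉ g → (W \ g).card ≤ 1 := by
    intro g hg hx₀g
    by_contra h
    push_neg at h
    obtain ⟨u, hu, u', hu', hne⟩ := Finset.one_lt_card.mp h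
    simp only [mem_sdiff] at hu hu'
    exact hKEY g hg hx₀g u hu.1 u' hu'.1 hne hu.2 hu'.2
  have hWinter : ∀ g ∈ F, x₀ ∉ g → W.card ≤ 1 + (W ∩ g).card := by
    intro g hg hx₀g
    have h1 := hWcap g hg hx₀g
    have h2 : (W \ g).card + (W ∩ g).card = W.card := by
      rw [Finset.card_sdiff_add_card_inter]
    omega
  -- W.card ≤ 3
  obtain ⟨g1', hg1'⟩ := Finset.card_pos.mp (by omega : 0 < (F.filter (fun e => x₀ ∉ e)).card)
  have hg1F : g1' ∈ F := (mem_filter.mp hg1').1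
  have hg1x : x₀ ∉ g1' := (mem_filter.mp hg1').2
  have hWle3 : W.card ≤ 3 := by
    by_contra h
    push_neg at h
    obtain ⟨W', hW'sub, hW'4⟩ := Finset.exists_subset_card_eq (s := W) (n := 4) h
    have hsubG : F.filter (fun e => x₀ ∉ e) ⊆ W'.powersetCard 3 := by
      intro g hgm
      have hgF := (mem_filter.mp hgm).1
      have hgx := (mem_filter.mp hgm).2
      have hcap : (W' \ g).card ≤ 1 := by
        refine le_trans (card_le_card (sdiff_subset_sdiff hW'sub (Finset.Subset.refl g))) ?_
        exact hWcap g hgF hgx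
      have hint : (W' \ g).card + (W' ∩ g).card = W'.card :=
        Finset.card_sdiff_add_card_inter _ _
      have h3le : 3 ≤ (W' ∩ g).card := by omega
      have hgsub : g ⊆ W' := by
        have heq : W' ∩ g = g := Finset.eq_of_subset_of_card_le inter_subset_right
          (by rw [huniform g hgF]; exact h3le)
        intro z hz
        have : z ∈ W' ∩ g := by rw [heq]; exact hz
        exact (mem_inter.mp this).1
      exact mem_powersetCard.mpr ⟨hgsub, huniform g hgF⟩
    have := (card_le_card hsubG).trans (le_of_eq (card_powersetCard 3 W'))
    rw [hW'4] at this
    have : (F.filter (fun e => x₀ ∉ e)).card ≤ 4 := by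
      simpa using this
    omega
  have hWpos : 1 ≤ W.card := by
    obtain ⟨u, hug, hu⟩ := hcover g1' hg1F hg1x
    exact Finset.card_pos.mpr ⟨u, hu⟩
  -- case analysis on W.card
  interval_cases hWcard : W.card
  · -- W.card = 1
    obtain ⟨w1, hw1⟩ := Finset.card_eq_one.mp hWcard
    have hw1W : w1 ∈ W := hw1 ▸ mem_singleton_self w1
    have hw1x := (hWmem w1 hw1W).1
    have hc1 := (hWmem w1 hw1W).2
    have hcpos : 1 ≤ cod F x₀ w1 := by omega
    obtain ⟨e', he', hx₀', hw1'⟩ := cod_pos_edge hcpos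
    obtain ⟨g, hg, hx₀g, hw1g⟩ := hpair e' he' x₀ hx₀' w1 hw1' (Ne.symm hw1x)
    obtain ⟨u, hug, hu⟩ := hcover g hg hx₀g
    rw [hw1] at hu
    exact absurd (mem_singleton.mp hu ▸ hug) hw1g
  · -- W.card = 2
    obtain ⟨w1, w2, hw12, hWeq⟩ := Finset.card_eq_two.mp hWcard
    have hw1W : w1 ∈ W := by rw [hWeq]; simp
    have hw2W : w2 ∈ W := by rw [hWeq]; simp
    exfalso
    have hcov' : ∀ g ∈ F, x₀ ∉ g → w1 ∈ g ∨ w2 ∈ g := by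
      intro g hg hx₀g
      obtain ⟨u, hug, hu⟩ := hcover g hg hx₀g
      rw [hWeq] at hu
      rcases mem_insert.mp hu with rfl | hu
      · exact Or.inl hug
      · exact Or.inr (mem_singleton.mp hu ▸ hug)
    have hsmall' : ∀ e ∈ F, ∀ u ∈ e, u ≠ x₀ → u ≠ w1 → u ≠ w2 →
        s + 3 * cod F x₀ u < deg F x₀ := by
      intro e he u hue hux hu1 hu2
      by_contra hle
      push_neg at hle
      have huW : u ∈ W := mem_filter.mpr ⟨hVmem _ he _ hue, hux, hle⟩
      rw [hWeq] at huW
      rcases mem_insert.mp huW with h | h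
      · exact hu1 h
      · exact hu2 (mem_singleton.mp h)
    exact W2False hs huniform hai hpair hcard
      (hWmem w1 hw1W).1 (hWmem w2 hw2W).1 hw12
      hd0 hd0u (hWmem w1 hw1W).2 (hWmem w2 hw2W).2 hcov' hsmall'
  · -- W.card = 3 : the structured case
    obtain ⟨w1, w2, w3, h12, h13, h23, hWeq⟩ := Finset.card_eq_three.mp hWcard
    have hw1W : w1 ∈ W := by rw [hWeq]; simp
    have hw2W : w2 ∈ W := by rw [hWeq]; simp
    have hw3W : w3 ∈ W := by rw [hWeq]; simp
    have hw1x := (hWmem w1 hw1W).1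
    have hw2x := (hWmem w2 hw2W).1
    have hw3x := (hWmem w3 hw3W).1
    set A : Finset α := insert x₀ {w1, w2, w3} with hA
    have hA4 : A.card = 4 := by
      rw [hA, card_insert_of_notMem (by simp [Ne.symm hw1x, Ne.symm hw2x, Ne.symm hw3x]),
        card_insert_of_notMem (by simp [h12, h13]), card_insert_of_notMem (by simp [h23]),
        card_singleton]
    -- every edge avoiding x₀ has ≥ 2 of W
    have hW2 : ∀ g ∈ F, x₀ ∉ g → 2 ≤ (W ∩ g).card := by
      intro g hg hx₀g
      have := hWinter g hg hx₀g
      omega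
    -- every edge containing x₀ meets W
    have hmeet : ∀ e ∈ F, x₀ ∈ e → ¬ (w1 ∉ e ∧ w2 ∉ e ∧ w3 ∉ e) := by
      rintro e he hx₀'' ⟨he1, he2, he3⟩
      -- pairwise codegree bounds via L8
      have hL12 := L8 huniform hai h12 h13 h23 he he1 he2 he3
      have hL21 := L8 huniform hai (Ne.symm h12) h23 h13 he he2 he1 he3
      have hL31 := L8 huniform hai (Ne.symm h13) (Ne.symm h23) h12 he he3 he1 he2
      -- covering count
      have hsub : F.filter (fun h => x₀ ∉ h) ⊆
          (F.filter (fun h => w1 ∈ h ∧ w2 ∈ h)) ∪ (F.filter (fun h => w1 ∈ h ∧ w3 ∈ h))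
            ∪ (F.filter (fun h => w2 ∈ h ∧ w3 ∈ h)) := by
        intro g hgm
        have hgF := (mem_filter.mp hgm).1
        have hgx := (mem_filter.mp hgm).2
        have h2c := hW2 g hgF hgx
        obtain ⟨a, ha, b, hb, hab⟩ := Finset.one_lt_card.mp (by omega : 1 < (W ∩ g).card)
        have haW := mem_inter.mp ha
        have hbW := mem_inter.mp hb
        have haw : a = w1 ∨ a = w2 ∨ a = w3 := by
          have := haW.1; rw [hWeq] at this; simpa using this
        have hbw : b = w1 ∨ b = w2 ∨ b = w3 := by
          have := hbW.1; rw [hWeq] at this; simpa using this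
        simp only [mem_union, mem_filter]
        rcases haw with rfl | rfl | rfl <;> rcases hbw with rfl | rfl | rfl <;>
          first
          | exact absurd rfl hab
          | exact Or.inl (Or.inl ⟨hgF, haW.2, hbW.2⟩)
          | exact Or.inl (Or.inl ⟨hgF, hbW.2, haW.2⟩)
          | exact Or.inl (Or.inr ⟨hgF, haW.2, hbW.2⟩)
          | exact Or.inl (Or.inr ⟨hgF, hbW.2, haW.2⟩)
          | exact Or.inr ⟨hgF, haW.2, hbW.2⟩
          | exact Or.inr ⟨hgF, hbW.2, haW.2⟩
      have hcount := (card_le_card hsub).trans ((card_union_le _ _).trans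
        (by exact add_le_add_left (card_union_le _ _) _))
      have hcod12 : (F.filter (fun h => w1 ∈ h ∧ w2 ∈ h)).card = cod F w1 w2 := rfl
      have hcod13 : (F.filter (fun h => w1 ∈ h ∧ w3 ∈ h)).card = cod F w1 w3 := rfl
      have hcod23 : (F.filter (fun h => w2 ∈ h ∧ w3 ∈ h)).card = cod F w2 w3 := rfl
      have hcc1 : cod F w2 w1 = cod F w1 w2 := cod_comm F w2 w1
      have hcc2 : cod F w3 w1 = cod F w1 w3 := cod_comm F w3 w1
      have hcc3 : cod F w3 w2 = cod F w2 w3 := cod_comm F w3 w2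
      omega
    have hA2 : ∀ e ∈ F, 2 ≤ (e ∩ A).card := by
      intro e he
      by_cases hx : x₀ ∈ e
      · have hnm := hmeet e he hx
        have : w1 ∈ e ∨ w2 ∈ e ∨ w3 ∈ e := by tauto
        obtain ⟨wi, hwi, hwix⟩ : ∃ u, u ∈ e ∧ (u = w1 ∨ u = w2 ∨ u = w3) := by
          rcases this with h | h | h
          exacts [⟨w1, h, Or.inl rfl⟩, ⟨w2, h, Or.inr (Or.inl rfl)⟩, ⟨w3, h, Or.inr (Or.inr rfl)⟩]
        have hsub2 : ({x₀, wi} : Finset α) ⊆ e ∩ A := by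
          intro z hz
          rcases mem_insert.mp hz with rfl | hz
          · exact mem_inter.mpr ⟨hx, by rw [hA]; simp⟩
          · rw [mem_singleton.mp hz]
            refine mem_inter.mpr ⟨hwi, ?_⟩
            rw [hA]
            rcases hwix with rfl | rfl | rfl <;> simp
        calc 2 = ({x₀, wi} : Finset α).card := by
              rw [card_insert_of_notMem, card_singleton]
              simp only [mem_singleton]
              rcases hwix with rfl | rfl | rfl
              exacts [Ne.symm hw1x, Ne.symm hw2x, Ne.symm hw3x]
          _ ≤ (e ∩ A).card := card_le_card hsub2
      · have h2c := hW2 e he hx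
        refine h2c.trans (card_le_card ?_)
        intro z hz
        have := mem_inter.mp hz
        refine mem_inter.mpr ⟨this.2, ?_⟩
        have := this.1; rw [hWeq] at this; rw [hA]
        simp only [mem_insert, mem_singleton] at this ⊢
        tauto
    obtain ⟨B, f, hdisj, hBcard, hf, hFeq⟩ := endgame hs huniform hai hpair hcard A hA4 hA2
    exact ⟨A, B, f, hdisj, hA4, hBcard, hf, hFeq⟩
end

section
/- Let s ≥ 0 and let F be a 3-uniform hypergraph in which every edge is disjoint from at most s other edges. Let x and y be two distinct vertices such that some edge of F is disjoint from {x,y}. Then the number of edges of F containing both x and y is at most s+3. -/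
/-- Let `s ≥ 0` and let `F` be a 3-uniform hypergraph in which every edge
is disjoint from at most `s` other edges. Let `x ≠ y` be vertices such that some edge of `F`
is disjoint from `{x,y}`. Then at most `s+3` edges of `F` contain both `x` and `y`. -/
theorem stmt_18 {α : Type*} [DecidableEq α] (s : ℕ)
    (F : Finset (Finset α))
    (huniform : ∀ A ∈ F, A.card = 3)
    (hai : ∀ A ∈ F, (F.filter fun B => Disjoint A B).card ≤ s)
    (x y : α) (hxy : x ≠ y)
    (hdisj : ∃ e ∈ F, x ∉ e ∧ y ∉ e) :
    (F.filter fun e => x ∈ e ∧ y ∈ e).card ≤ s + 3 := by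
  obtain ⟨e, heF, hxe, hye⟩ := hdisj
  classical
  set S := F.filter fun A => x ∈ A ∧ y ∈ A with hS
  have hsplit : S = (S.filter fun A => Disjoint e A) ∪ (S.filter fun A => ¬ Disjoint e A) :=
    (Finset.filter_union_filter_not_eq _ S).symm
  have h1 : (S.filter fun A => Disjoint e A).card ≤ s := by
    refine le_trans (Finset.card_le_card ?_) (hai e heF)
    intro A hA
    simp only [Finset.mem_filter, hS] at hA ⊢
    exact ⟨hA.1.1, hA.2⟩
  have h2 : (S.filter fun A => ¬ Disjoint e A).card ≤ 3 := by
    have hsub : (S.filter fun A => ¬ Disjoint e A) ⊆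
        e.image (fun z => insert x (insert y {z})) := by
      intro A hA
      simp only [Finset.mem_filter, hS] at hA
      obtain ⟨⟨hAF, hxA, hyA⟩, hnd⟩ := hA
      rw [Finset.not_disjoint_iff] at hnd
      obtain ⟨z, hze, hzA⟩ := hnd
      refine Finset.mem_image.mpr ⟨z, hze, ?_⟩
      have hzx : z ≠ x := fun h => hxe (h ▸ hze)
      have hzy : z ≠ y := fun h => hye (h ▸ hze)
      have hsub2 : insert x (insert y ({z} : Finset α)) ⊆ A := by
        intro w hw
        simp only [Finset.mem_insert, Finset.mem_singleton] at hw
        rcases hw with rfl | rfl | rfl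
        · exact hxA
        · exact hyA
        · exact hzA
      have hcard : (insert x (insert y ({z} : Finset α))).card = 3 := by
        rw [Finset.card_insert_of_notMem, Finset.card_insert_of_notMem] <;>
          simp [hxy, hzx.symm, hzy.symm]
      exact (Finset.eq_of_subset_of_card_le hsub2 (by rw [huniform A hAF, hcard]))
    calc (S.filter fun A => ¬ Disjoint e A).card
        ≤ (e.image (fun z => insert x (insert y ({z} : Finset α)))).card := Finset.card_le_card hsub
      _ ≤ e.card := Finset.card_image_le
      _ = 3 := huniform e heF
  calc S.card ≤ (S.filter fun A => Disjoint e A).card +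
        (S.filter fun A => ¬ Disjoint e A).card := by
        nth_rewrite 1 [hsplit]; exact Finset.card_union_le _ _
    _ ≤ s + 3 := add_le_add h1 h2
end

section
/- Let k ≥ 1, s ≥ 0, and let F be a k-uniform [0,s]-almost intersecting hypergraph such that no set of at most k-1 vertices meets all edges of F. Then F contains no sunflower with k+s+1 petals. -/
/-- Let `k ≥ 1`, `s ≥ 0`, and let `F` be a `k`-uniform `[0,s]`-almost
intersecting hypergraph such that no set of at most `k-1` vertices meets all edges of `F`.
Then `F` contains no sunflower with `k+s+1` petals. -/
theorem stmt_19 {α : Type*} [DecidableEq α] (k s : ℕ) (hk : 1 ≤ k)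
    (F : Finset (Finset α))
    (huniform : ∀ A ∈ F, A.card = k)
    (hai : ∀ A ∈ F, (F.filter fun B => Disjoint A B).card ≤ s)
    (hcover : ¬ ∃ T : Finset α, T.card ≤ k - 1 ∧ ∀ e ∈ F, (T ∩ e).Nonempty) :
    ¬ ∃ (P : Finset (Finset α)) (C : Finset α), P ⊆ F ∧ P.card = k + s + 1 ∧
      (∀ X ∈ P, ∀ Y ∈ P, X ≠ Y → X ∩ Y = C) ∧ (∀ X ∈ P, (X \ C).Nonempty) := by
  rintro ⟨P, C, hPF, hPcard, hcore, hpet⟩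
  -- get two distinct petals
  have h2 : 1 < P.card := by omega
  obtain ⟨X, hX, Y, hY, hXY⟩ := Finset.one_lt_card.mp h2
  have hCX : C ⊆ X := by
    rw [← hcore X hX Y hY hXY]; exact Finset.inter_subset_left
  have hXcard : X.card = k := huniform X (hPF hX)
  have hClt : C.card < k := by
    obtain ⟨a, ha⟩ := hpet X hX
    have : C ⊂ X := Finset.ssubset_iff_of_subset hCX |>.mpr
      ⟨a, (Finset.mem_sdiff.mp ha).1, (Finset.mem_sdiff.mp ha).2⟩
    calc C.card < X.card := Finset.card_lt_card this
      _ = k := hXcard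
  push_neg at hcover
  obtain ⟨e, heF, heC⟩ := hcover C (by omega)
  have hecard : e.card = k := huniform e heF
  have hene : e.Nonempty := Finset.card_pos.mp (by omega)
  -- petals meeting e
  set M := P.filter (fun Z => ¬ Disjoint e Z) with hM
  set D := P.filter (fun Z => Disjoint e Z) with hD
  have hMD : D.card + M.card = k + s + 1 := by
    rw [hD, hM, Finset.card_filter_add_card_filter_not, hPcard]
  have hMle : M.card ≤ k := by
    by_contra h
    push_neg at h
    rw [← hecard] at h
    obtain ⟨x₀, hx₀⟩ := hene
    have := Finset.exists_ne_map_eq_of_card_lt_of_maps_to h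
      (f := fun Z => if h : (e ∩ Z).Nonempty then h.choose else x₀) ?_
    · obtain ⟨Z₁, hZ₁, Z₂, hZ₂, hne, heq⟩ := this
      simp only [hM, Finset.mem_filter] at hZ₁ hZ₂
      have h1 : (e ∩ Z₁).Nonempty := by
        rw [Finset.not_disjoint_iff] at hZ₁
        obtain ⟨a, ha, ha'⟩ := hZ₁.2
        exact ⟨a, Finset.mem_inter.mpr ⟨ha, ha'⟩⟩
      have h2' : (e ∩ Z₂).Nonempty := by
        rw [Finset.not_disjoint_iff] at hZ₂
        obtain ⟨a, ha, ha'⟩ := hZ₂.2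
        exact ⟨a, Finset.mem_inter.mpr ⟨ha, ha'⟩⟩
      simp only [dif_pos h1, dif_pos h2'] at heq
      have m1 := h1.choose_spec
      have m2 := h2'.choose_spec
      rw [heq] at m1
      have : h2'.choose ∈ Z₁ ∩ Z₂ := Finset.mem_inter.mpr
        ⟨(Finset.mem_inter.mp m1).2, (Finset.mem_inter.mp m2).2⟩
      rw [hcore Z₁ hZ₁.1 Z₂ hZ₂.1 hne] at this
      have he' : h2'.choose ∈ e := (Finset.mem_inter.mp m2).1
      have : h2'.choose ∈ C ∩ e := Finset.mem_inter.mpr ⟨this, he'⟩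
      rw [heC] at this
      exact absurd this (Finset.notMem_empty _)
    · intro Z hZ
      simp only [hM, Finset.mem_coe, Finset.mem_filter] at hZ
      have h1 : (e ∩ Z).Nonempty := by
        rw [Finset.not_disjoint_iff] at hZ
        obtain ⟨a, ha, ha'⟩ := hZ.2
        exact ⟨a, Finset.mem_inter.mpr ⟨ha, ha'⟩⟩
      simp only [dif_pos h1]
      exact (Finset.mem_inter.mp h1.choose_spec).1
  have hDge : s + 1 ≤ D.card := by omega
  have hsub : D ⊆ F.filter (fun B => Disjoint e B) := by
    intro Z hZ
    simp only [hD, Finset.mem_filter] at hZ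
    exact Finset.mem_filter.mpr ⟨hPF hZ.1, hZ.2⟩
  have := Finset.card_le_card hsub
  have := hai e heF
  omega
end
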